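/- Let p be an odd prime, χ the Legendre symbol, and S ⊆ F_p nonempty with 4·|S|² ≤ p (so |S| ≤ √p / 2). If b is chosen uniformly at random from F_p, then the probability that |{x ∈ S : χ(x+b) = -1}| is odd is at least 1/2 - (|S|-1)/(2√p) - |S|/p ≥ 1/2 - 1/4 - 1/(2√p) ≥ 1/5 for p ≥ 100. -/
import Mathlib

open Classical in
noncomputable def legChar (p : ℕ) (a : ZMod p) : ℤ :=
  if a = 0 then 0 else if IsSquare a then 1 else -1

open Classical in
lemma legChar_eq_quadraticChar (p : ℕ) [Fact p.Prime] (a : ZMod p) :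
    legChar p a = quadraticChar (ZMod p) a := by
  rw [quadraticChar_apply, quadraticCharFun, legChar]
  split_ifs <;> rfl

open Classical in
lemma legChar_prod (p : ℕ) [Fact p.Prime] (S : Finset (ZMod p)) (b : ZMod p) :
    legChar p (∏ x ∈ S, (x + b)) = ∏ x ∈ S, legChar p (x + b) := by
  simp only [legChar_eq_quadraticChar]
  exact map_prod _ _ _

open Classical Finset in
lemma legChar_good (p : ℕ) [Fact p.Prime] (S : Finset (ZMod p)) (b : ZMod p)
    (hb : ∀ x ∈ S, x + b ≠ 0) :
    legChar p (∏ x ∈ S, (x + b)) =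
      (-1) ^ (S.filter fun x => legChar p (x + b) = -1).card := by
  rw [legChar_prod, ← Finset.prod_filter_mul_prod_filter_not S
    (fun x => legChar p (x + b) = -1)]
  have h1 : ∏ x ∈ S.filter (fun x => legChar p (x + b) = -1), legChar p (x + b)
      = (-1) ^ (S.filter fun x => legChar p (x + b) = -1).card := by
    rw [Finset.prod_congr rfl (fun x hx => (Finset.mem_filter.1 hx).2),
      Finset.prod_const]
  have h2 : ∏ x ∈ S.filter (fun x => ¬ legChar p (x + b) = -1), legChar p (x + b)
      = 1 := by
    apply Finset.prod_eq_one
    intro x hx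
    obtain ⟨hxS, hne⟩ := Finset.mem_filter.1 hx
    have := hb x hxS
    unfold legChar at hne ⊢
    split_ifs at hne ⊢ with h h' <;> first | rfl | exact absurd rfl hne | exact absurd h this
  rw [h1, h2, mul_one]

set_option maxHeartbeats 1000000 in
open Classical in
theorem parity_probability_one_fifth (p : ℕ) (hp : p.Prime) (hodd : p ≠ 2)
    [Fact p.Prime] (S : Finset (ZMod p)) (hS : S.Nonempty)
    (hsmall : 4 * S.card ^ 2 ≤ p) (hp100 : 100 ≤ p)
    (hWeil : |(∑ b : ZMod p, legChar p (∏ x ∈ S, (x + b)) : ℝ)| ≤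
      ((S.card : ℝ) - 1) * Real.sqrt p) :
    ((Finset.univ.filter fun b : ZMod p =>
        Odd (S.filter fun x => legChar p (x + b) = -1).card).card : ℝ) / p ≥
      1 / 2 - ((S.card : ℝ) - 1) / (2 * Real.sqrt p) - (S.card : ℝ) / p ∧
    ((Finset.univ.filter fun b : ZMod p =>
        Odd (S.filter fun x => legChar p (x + b) = -1).card).card : ℝ) / p ≥
      1 / 5 := by
  have hNZ : NeZero p := ⟨hp.ne_zero⟩
  set Bad : Finset (ZMod p) := S.image (fun x => -x) with hBad
  set Og : ℕ := (Badᶜ.filter fun b : ZMod p =>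
      Odd (S.filter fun x => legChar p (x + b) = -1).card).card with hOg
  set O : ℕ := (Finset.univ.filter fun b : ZMod p =>
      Odd (S.filter fun x => legChar p (x + b) = -1).card).card with hO
  -- sum over bad b is zero
  have hbadzero : ∀ b ∈ Bad, legChar p (∏ x ∈ S, (x + b)) = 0 := by
    intro b hb
    obtain ⟨x, hx, hxb⟩ := Finset.mem_image.1 hb
    have : x + b = 0 := by rw [← hxb]; ring
    rw [Finset.prod_eq_zero hx this]
    simp [legChar]
  have hgoodne : ∀ b ∈ Badᶜ, ∀ x ∈ S, x + b ≠ 0 := by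
    intro b hb x hx hxb
    apply (Finset.mem_compl.1 hb)
    exact Finset.mem_image.2 ⟨x, hx, by linear_combination -hxb⟩
  -- compute the sum
  have hT : (∑ b : ZMod p, legChar p (∏ x ∈ S, (x + b))) =
      (Badᶜ.card : ℤ) - 2 * Og := by
    rw [← Finset.sum_add_sum_compl Bad]
    rw [Finset.sum_eq_zero hbadzero, zero_add]
    have : ∀ b ∈ Badᶜ, legChar p (∏ x ∈ S, (x + b)) =
        (if Odd (S.filter fun x => legChar p (x + b) = -1).card then (-1 : ℤ) else 1) := by
      intro b hb
      rw [legChar_good p S b (hgoodne b hb)]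
      by_cases h : Odd (S.filter fun x => legChar p (x + b) = -1).card
      · rw [if_pos h, h.neg_one_pow]
      · rw [if_neg h, (Nat.not_odd_iff_even.1 h).neg_one_pow]
    rw [Finset.sum_congr rfl this, Finset.sum_ite, Finset.sum_const, Finset.sum_const]
    have hsplit := Finset.card_filter_add_card_filter_not
      (s := Badᶜ) (p := fun b : ZMod p =>
        Odd (S.filter fun x => legChar p (x + b) = -1).card)
    rw [← hOg] at hsplit
    simp only [nsmul_eq_mul, smul_eq_mul, mul_neg_one, mul_one]
    omega
  -- basic cardinalities
  have hcardZ : Fintype.card (ZMod p) = p := ZMod.card p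
  have hGoodcard : Badᶜ.card = p - Bad.card := by rw [Finset.card_compl, hcardZ]
  have hBadle : Bad.card ≤ S.card := Finset.card_image_le
  have hBadlep : Bad.card ≤ p := by have := Finset.card_le_univ Bad; omega
  have hGoodcardR : (Badᶜ.card : ℝ) ≥ (p : ℝ) - S.card := by
    rw [hGoodcard, Nat.cast_sub hBadlep]
    have : (Bad.card : ℝ) ≤ S.card := by exact_mod_cast hBadle
    linarith
  have hOgO : Og ≤ O := Finset.card_le_card
    (Finset.filter_subset_filter _ (Finset.subset_univ _))
  -- real versions
  have hTR : (∑ b : ZMod p, legChar p (∏ x ∈ S, (x + b)) : ℝ) =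
      (Badᶜ.card : ℝ) - 2 * Og := by exact_mod_cast hT
  rw [hTR] at hWeil
  have hW := (abs_le.1 hWeil).2
  -- real-number notation and facts
  set s : ℝ := (S.card : ℝ) with hs
  set q : ℝ := (p : ℝ) with hq
  set r : ℝ := Real.sqrt p with hr
  have hq0 : (0:ℝ) < q := by rw [hq]; exact_mod_cast hp.pos
  have hr0 : (0:ℝ) < r := Real.sqrt_pos.2 hq0
  have hrr : r * r = q := Real.mul_self_sqrt (le_of_lt hq0)
  have hs1 : (1:ℝ) ≤ s := by rw [hs]; exact_mod_cast hS.card_pos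
  have h4s : 4 * s ^ 2 ≤ q := by
    rw [hs, hq]; exact_mod_cast hsmall
  have h2s : 2 * s ≤ r := by
    nlinarith [sq_nonneg (2 * s - r)]
  have hr10 : (10:ℝ) ≤ r := by
    have : (100:ℝ) ≤ q := by rw [hq]; exact_mod_cast hp100
    nlinarith [sq_nonneg (r - 10)]
  -- key inequality: 2*O ≥ q - s - (s-1)*r
  have hkey : 2 * (O : ℝ) ≥ q - s - (s - 1) * r := by
    have h2 : (Og : ℝ) ≤ O := by exact_mod_cast hOgO
    linarith [hGoodcardR, hW]
  have main : (O : ℝ) / q ≥ 1 / 2 - (s - 1) / (2 * r) - s / q := by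
    have e1 : (s - 1) / (2 * r) = (s - 1) * r / (2 * q) := by
      rw [div_eq_div_iff (by positivity) (by positivity)]
      linear_combination (2 - 2 * s) * hrr
    rw [e1, ge_iff_le, ← sub_nonneg]
    have e2 : (O : ℝ) / q - (1 / 2 - (s - 1) * r / (2 * q) - s / q) =
        (2 * (O : ℝ) - (q - s - (s - 1) * r) + s) / (2 * q) := by
      field_simp
      ring
    rw [e2]
    apply div_nonneg _ (by positivity)
    linarith [hkey]
  refine ⟨main, ?_⟩
  have h1 : (s - 1) / (2 * r) ≤ 1 / 4 := by
    rw [div_le_iff₀ (by positivity)]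
    linarith
  have h2 : s / q ≤ 1 / 20 := by
    rw [div_le_iff₀ hq0]
    nlinarith
  linarith [main, h1, h2]
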